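/- Let p ≥ 5 be a prime and d an integer with p ∤ d, and let j, k be nonnegative integers with j + k = 6. Then ∑_{m=1}^{p−1} ∑_{n=1}^{p−1} m^j n^k (dm² − n²)^{p−3} (dn² − m²)^{p−3} ≡ 0 (mod p). -/
import Mathlib

open Finset

-- bridge lemma: sum over Icc 1 (p-1) in ℤ equals sum over nonzero elements of ZMod p
lemma my_sum_Icc_cast (p : ℕ) [hF : Fact p.Prime] (h : ZMod p → ZMod p) :
    ∑ m ∈ Finset.Icc (1:ℤ) ((p:ℤ)-1), h (m : ZMod p)
      = ∑ x ∈ Finset.univ.erase (0 : ZMod p), h x := by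
  have hp0 : 0 < p := (Fact.out : p.Prime).pos
  refine Finset.sum_nbij' (fun m => ((m : ZMod p))) (fun x => ((x.val : ℤ))) ?_ ?_ ?_ ?_ ?_
  · intro a ha
    simp only [Finset.mem_Icc] at ha
    simp only [Finset.mem_erase, Finset.mem_univ, and_true]
    intro h0
    rw [ZMod.intCast_zmod_eq_zero_iff_dvd] at h0
    have := Int.le_of_dvd (by omega) h0
    omega
  · intro x hx
    simp only [Finset.mem_erase, Finset.mem_univ, and_true] at hx
    have h1 : x.val < p := ZMod.val_lt x
    have h2 : x.val ≠ 0 := by simpa [ZMod.val_eq_zero] using hx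
    simp only [Finset.mem_Icc]
    omega
  · intro a ha
    simp only [Finset.mem_Icc] at ha
    show ((a : ZMod p).val : ℤ) = a
    rw [ZMod.val_intCast]
    exact Int.emod_eq_of_lt (by omega) (by omega)
  · intro x hx
    show (((x.val : ℤ)) : ZMod p) = x
    push_cast
    simp [ZMod.natCast_val, ZMod.cast_id]
  · intro a ha; rfl

lemma my_sum_erase_mul (p : ℕ) [hF : Fact p.Prime] (c : ZMod p) (hc : c ≠ 0)
    (f : ZMod p → ZMod p) :
    ∑ x ∈ Finset.univ.erase (0 : ZMod p), f x
      = ∑ x ∈ Finset.univ.erase (0 : ZMod p), f (c * x) := by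
  refine Finset.sum_nbij' (fun x => c⁻¹ * x) (fun x => c * x) ?_ ?_ ?_ ?_ ?_
  · intro a ha
    simp only [Finset.mem_erase, Finset.mem_univ, and_true] at *
    exact mul_ne_zero (inv_ne_zero hc) ha
  · intro a ha
    simp only [Finset.mem_erase, Finset.mem_univ, and_true] at *
    exact mul_ne_zero hc ha
  · intro a ha; field_simp
  · intro a ha; field_simp
  · intro a ha
    show f a = f (c * (c⁻¹ * a))
    rw [← mul_assoc, mul_inv_cancel₀ hc, one_mul]

theorem stmt_9 (p : ℕ) (hp : p.Prime) (hp5 : 5 ≤ p) (d : ℤ) (hd : ¬ (p : ℤ) ∣ d)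
    (j k : ℕ) (hjk : j + k = 6) :
    (p : ℤ) ∣ ∑ m ∈ Finset.Icc (1 : ℤ) ((p : ℤ) - 1), ∑ n ∈ Finset.Icc (1 : ℤ) ((p : ℤ) - 1),
      m ^ j * n ^ k * (d * m ^ 2 - n ^ 2) ^ (p - 3) * (d * n ^ 2 - m ^ 2) ^ (p - 3) := by
  haveI : Fact p.Prime := ⟨hp⟩
  rw [← ZMod.intCast_zmod_eq_zero_iff_dvd]
  push_cast
  set e : ZMod p := (d : ZMod p) with he
  -- rewrite as sum over nonzero residues
  rw [my_sum_Icc_cast p (fun x => ∑ n ∈ Finset.Icc (1:ℤ) ((p:ℤ)-1),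
        x ^ j * (n : ZMod p) ^ k * (e * x ^ 2 - (n : ZMod p) ^ 2) ^ (p - 3)
          * (e * (n : ZMod p) ^ 2 - x ^ 2) ^ (p - 3))]
  have h2 : ∀ x : ZMod p, (∑ n ∈ Finset.Icc (1:ℤ) ((p:ℤ)-1),
        x ^ j * (n : ZMod p) ^ k * (e * x ^ 2 - (n : ZMod p) ^ 2) ^ (p - 3)
          * (e * (n : ZMod p) ^ 2 - x ^ 2) ^ (p - 3))
      = ∑ y ∈ Finset.univ.erase (0 : ZMod p),
        x ^ j * y ^ k * (e * x ^ 2 - y ^ 2) ^ (p - 3) * (e * y ^ 2 - x ^ 2) ^ (p - 3) :=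
    fun x => my_sum_Icc_cast p
      (fun y => x ^ j * y ^ k * (e * x ^ 2 - y ^ 2) ^ (p - 3) * (e * y ^ 2 - x ^ 2) ^ (p - 3))
  rw [Finset.sum_congr rfl (fun x _ => h2 x)]
  set S := ∑ x ∈ Finset.univ.erase (0 : ZMod p), ∑ y ∈ Finset.univ.erase (0 : ZMod p),
      x ^ j * y ^ k * (e * x ^ 2 - y ^ 2) ^ (p - 3) * (e * y ^ 2 - x ^ 2) ^ (p - 3) with hS
  -- pick a generator of the unit group
  obtain ⟨g, hg⟩ := IsCyclic.exists_generator (α := (ZMod p)ˣ)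
  have horder : orderOf g = p - 1 := by
    rw [orderOf_eq_card_of_forall_mem_zpowers hg, Nat.card_eq_fintype_card, ZMod.card_units_eq_totient,
      Nat.totient_prime hp]
  set c : ZMod p := (g : ZMod p) with hcdef
  have hc : c ≠ 0 := g.ne_zero
  have hcpow : c ^ (p - 3) ≠ 1 := by
    intro hone
    have : (g ^ (p - 3) : (ZMod p)ˣ) = 1 := by
      ext; rw [Units.val_pow_eq_pow_val]; simpa using hone
    have hdvd : orderOf g ∣ p - 3 := orderOf_dvd_of_pow_eq_one this
    rw [horder] at hdvd
    have := Nat.le_of_dvd (by omega) hdvd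
    omega
  -- scaling identity
  have key : ∀ x y : ZMod p,
      (c*x) ^ j * (c*y) ^ k * (e * (c*x) ^ 2 - (c*y) ^ 2) ^ (p - 3)
        * (e * (c*y) ^ 2 - (c*x) ^ 2) ^ (p - 3)
      = c ^ (p - 3) * (x ^ j * y ^ k * (e * x ^ 2 - y ^ 2) ^ (p - 3)
        * (e * y ^ 2 - x ^ 2) ^ (p - 3)) := by
    intro x y
    have h1 : e * (c*x) ^ 2 - (c*y) ^ 2 = c ^ 2 * (e * x ^ 2 - y ^ 2) := by ring
    have h1' : e * (c*y) ^ 2 - (c*x) ^ 2 = c ^ 2 * (e * y ^ 2 - x ^ 2) := by ring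
    have hexp : c ^ j * c ^ k * (c ^ 2) ^ (p - 3) * (c ^ 2) ^ (p - 3) = c ^ (p - 3) := by
      have h4 : (c ^ 2) ^ (p - 3) = c ^ (2 * (p - 3)) := by rw [← pow_mul]
      rw [h4, ← pow_add, ← pow_add, ← pow_add]
      have hn : j + k + 2 * (p - 3) + 2 * (p - 3) = (p - 1) * 3 + (p - 3) := by omega
      rw [hn, pow_add, pow_mul, ZMod.pow_card_sub_one_eq_one hc, one_pow, one_mul]
    calc (c*x) ^ j * (c*y) ^ k * (e * (c*x) ^ 2 - (c*y) ^ 2) ^ (p - 3)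
        * (e * (c*y) ^ 2 - (c*x) ^ 2) ^ (p - 3)
        = (c ^ j * c ^ k * (c ^ 2) ^ (p - 3) * (c ^ 2) ^ (p - 3))
            * (x ^ j * y ^ k * (e * x ^ 2 - y ^ 2) ^ (p - 3)
              * (e * y ^ 2 - x ^ 2) ^ (p - 3)) := by
          rw [h1, h1', mul_pow c x, mul_pow c y, mul_pow (c^2), mul_pow (c^2)]; ring
      _ = _ := by rw [hexp]
  have hscale : S = c ^ (p - 3) * S := by
    conv_lhs => rw [hS,
      my_sum_erase_mul p c hc (fun x => ∑ y ∈ Finset.univ.erase (0 : ZMod p),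
        x ^ j * y ^ k * (e * x ^ 2 - y ^ 2) ^ (p - 3) * (e * y ^ 2 - x ^ 2) ^ (p - 3))]
    rw [Finset.sum_congr rfl (fun x _ => my_sum_erase_mul p c hc
      (fun y => (c*x) ^ j * y ^ k * (e * (c*x) ^ 2 - y ^ 2) ^ (p - 3)
        * (e * y ^ 2 - (c*x) ^ 2) ^ (p - 3)))]
    rw [Finset.mul_sum]
    refine Finset.sum_congr rfl (fun x _ => ?_)
    rw [Finset.mul_sum]
    exact Finset.sum_congr rfl (fun y _ => key x y)
  have : (c ^ (p - 3) - 1) * S = 0 := by linear_combination -hscale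
  rcases mul_eq_zero.mp this with h | h
  · exact absurd (by linear_combination h) hcpow
  · exact h
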